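/- Let B ∈ SL(N,ℤ) be a hyperbolic toral automorphism (no eigenvalue of modulus 1). Suppose x* ∈ ℝ^N is a point whose orbit under the ℤ^N ⋊_B ℤ action ((b,n), x) ↦ Bⁿx + b is dense in ℝ^N. Then the set of fixed points of nontrivial group elements, i.e. the set {(I - Bⁿ)⁻¹ b : b ∈ ℤ^N, n ∈ ℤ, n ≠ 0}, has x* in its closure. -/

import Mathlib

open Matrix

/-- Integer power of a matrix, using the nonsingular inverse for negative exponents. -/
noncomputable def mzpow {N : ℕ} (A : Matrix (Fin N) (Fin N) ℝ) : ℤ → Matrix (Fin N) (Fin N) ℝ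
  | (Int.ofNat n) => A ^ n
  | (Int.negSucc n) => A⁻¹ ^ (n + 1)

/-- Let `B ∈ SL(N,ℤ)` be a hyperbolic toral automorphism. If the orbit of `x*` under the
affine action `((b,n), x) ↦ Bⁿx + b` of `ℤ^N ⋊_B ℤ` is dense in `ℝ^N`, then `x*` lies in
the closure of the set of fixed points `(I - Bⁿ)⁻¹ b`, `b ∈ ℤ^N`, `n ≠ 0`, of nontrivial
group elements. -/
theorem fixed_points_accumulate {N : ℕ} (B : Matrix (Fin N) (Fin N) ℤ)
    (hdet : B.det = 1)
    (hhyp : ∀ μ ∈ spectrum ℂ (B.map (fun k => (k : ℂ))), ‖μ‖ ≠ 1)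
    (x : Fin N → ℝ)
    (hdense : Dense {y : Fin N → ℝ | ∃ (b : Fin N → ℤ) (n : ℤ),
      y = (mzpow (B.map (fun k => (k : ℝ))) n).mulVec x + fun i => (b i : ℝ)}) :
    x ∈ closure {z : Fin N → ℝ | ∃ (b : Fin N → ℤ) (n : ℤ), n ≠ 0 ∧
      z = ((1 - mzpow (B.map (fun k => (k : ℝ))) n)⁻¹).mulVec (fun i => (b i : ℝ))} := by
  classical
  set M : Matrix (Fin N) (Fin N) ℝ := B.map (fun k => (k : ℝ)) with hM
  -- Step B: (1 - M^n) invertible for n > 0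
  have hinv : ∀ n : ℕ, 0 < n → IsUnit ((1 : Matrix (Fin N) (Fin N) ℝ) - M ^ n).det := by
    intro n hn
    set C : Matrix (Fin N) (Fin N) ℂ := B.map (fun k => (k : ℂ)) with hC
    rw [isUnit_iff_ne_zero]
    intro h0
    have hmapM : Complex.ofRealHom.mapMatrix M = C := by
      ext i j
      simp [hM, hC, RingHom.mapMatrix_apply, Matrix.map_apply]
    have hmap : Complex.ofRealHom.mapMatrix ((1 : Matrix (Fin N) (Fin N) ℝ) - M ^ n)
        = 1 - C ^ n := by
      rw [map_sub, map_pow, hmapM, _root_.map_one]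
    have hdetC : ((1 : Matrix (Fin N) (Fin N) ℂ) - C ^ n).det = 0 := by
      rw [← hmap, ← RingHom.map_det, h0, map_zero]
    have h1 : (1 : ℂ) ∈ spectrum ℂ (C ^ n) := by
      rw [spectrum.mem_iff]
      intro hU
      rw [Matrix.isUnit_iff_isUnit_det] at hU
      simp only [_root_.map_one] at hU
      rw [isUnit_iff_ne_zero] at hU
      exact hU (by simpa using hdetC)
    rw [spectrum.map_pow_of_pos C hn] at h1
    obtain ⟨μ, hμ, hμn⟩ := h1
    apply hhyp μ hμ
    have hμn' : μ ^ n = 1 := hμn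
    have : ‖μ‖ ^ n = 1 := by
      rw [← norm_pow, hμn', norm_one]
    rcases (pow_eq_one_iff_of_ne_zero hn.ne').mp this with h | ⟨h, _⟩
    · exact h
    · exfalso; have := norm_nonneg μ; rw [h] at this; linarith
  -- Step A: B^n ≡ 1 mod d for some n > 0
  have key : ∀ d : ℕ, 0 < d → ∃ n : ℕ, 0 < n ∧ ∀ i j,
      (d : ℤ) ∣ ((B ^ n) i j - (1 : Matrix (Fin N) (Fin N) ℤ) i j) := by
    intro d hd
    haveI : NeZero d := ⟨hd.ne'⟩
    set φ := Int.castRingHom (ZMod d) with hφ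
    have hu : IsUnit (φ.mapMatrix B) := by
      rw [Matrix.isUnit_iff_isUnit_det, ← RingHom.map_det, hdet]
      simp
    obtain ⟨u, hu⟩ := hu
    refine ⟨orderOf u, orderOf_pos u, ?_⟩
    have hmm : φ.mapMatrix (B ^ orderOf u) = φ.mapMatrix (1 : Matrix (Fin N) (Fin N) ℤ) := by
      rw [map_pow, ← hu, _root_.map_one]
      rw [← Units.val_pow_eq_pow_val, pow_orderOf_eq_one u, Units.val_one]
    intro i j
    have h2 : (((B ^ orderOf u) i j : ℤ) : ZMod d)
        = (((1 : Matrix (Fin N) (Fin N) ℤ) i j : ℤ) : ZMod d) := by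
      have := congrFun (congrFun hmm i) j
      simpa [RingHom.mapMatrix_apply, Matrix.map_apply] using this
    exact ((ZMod.intCast_eq_intCast_iff _ _ _).mp h2).symm.dvd
  -- Main argument: rational points are fixed points, and they approximate x
  rw [Metric.mem_closure_iff]
  intro ε hε
  obtain ⟨m, hm⟩ := exists_nat_one_div_lt hε
  set d : ℕ := m + 1 with hdd
  have hd : 0 < d := Nat.succ_pos m
  have hdR : (0 : ℝ) < d := by exact_mod_cast hd
  have hdε : 1 / (d : ℝ) < ε := by
    rw [hdd]; push_cast; exact hm
  set p : Fin N → ℤ := fun i => round ((d : ℝ) * x i) with hp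
  set r : Fin N → ℝ := fun i => (p i : ℝ) / d with hr
  obtain ⟨n, hn, hdvd⟩ := key d hd
  have hpow : M ^ n = (B ^ n).map (fun k => (k : ℝ)) := by
    have h := map_pow ((Int.castRingHom ℝ).mapMatrix) B n
    simp only [RingHom.mapMatrix_apply] at h
    exact h.symm
  have key2 : ∀ i, (d : ℤ) ∣ (p i - (B ^ n).mulVec p i) := by
    intro i
    have heq : p i - (B ^ n).mulVec p i
        = ∑ j, -(((B ^ n) i j - (1 : Matrix (Fin N) (Fin N) ℤ) i j) * p j) :=
      calc p i - (B ^ n).mulVec p i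
          = ((1 - B ^ n).mulVec p) i := by
            rw [Matrix.sub_mulVec, Matrix.one_mulVec]; rfl
        _ = ∑ j, -(((B ^ n) i j - (1 : Matrix (Fin N) (Fin N) ℤ) i j) * p j) := by
            simp only [Matrix.mulVec, dotProduct, Matrix.sub_apply]
            exact Finset.sum_congr rfl fun j _ => by ring
    rw [heq]
    exact Finset.dvd_sum fun j _ => (dvd_mul_of_dvd_left (hdvd i j) (p j)).neg_right
  set b : Fin N → ℤ := fun i => (p i - (B ^ n).mulVec p i) / d with hbdef
  have hbd : ∀ i, (d : ℤ) * b i = p i - (B ^ n).mulVec p i :=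
    fun i => Int.mul_ediv_cancel' (key2 i)
  have hb : ((1 : Matrix (Fin N) (Fin N) ℝ) - M ^ n).mulVec r = fun i => (b i : ℝ) := by
    funext i
    simp only [Matrix.sub_mulVec, Matrix.one_mulVec, Pi.sub_apply]
    rw [hpow]
    have hsum : ((B ^ n).map (fun k => (k : ℝ))).mulVec r i
        = (((B ^ n).mulVec p i : ℤ) : ℝ) / d := by
      simp only [Matrix.mulVec, dotProduct, Matrix.map_apply, hr]
      push_cast
      rw [Finset.sum_div]
      exact Finset.sum_congr rfl fun j _ => (mul_div_assoc _ _ _).symm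
    rw [hsum]
    have hcast : (d : ℝ) * (b i : ℝ) = (p i : ℝ) - ((B ^ n).mulVec p i : ℤ) := by
      exact_mod_cast congrArg (fun z : ℤ => (z : ℝ)) (hbd i)
    rw [hr]
    field_simp
    linarith [hcast]
  refine ⟨r, ⟨b, (n : ℤ), Int.natCast_ne_zero.mpr hn.ne', ?_⟩, ?_⟩
  · have hmz : mzpow M (n : ℤ) = M ^ n := rfl
    rw [hmz, ← hb, Matrix.mulVec_mulVec, Matrix.nonsing_inv_mul _ (hinv n hn), Matrix.one_mulVec]
  · rw [dist_pi_lt_iff hε]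
    intro i
    rw [Real.dist_eq]
    have h1 : |(d : ℝ) * x i - p i| ≤ 1 / 2 := abs_sub_round ((d : ℝ) * x i)
    have h2 : x i - r i = ((d : ℝ) * x i - p i) / d := by
      rw [hr]; field_simp
    rw [h2, abs_div, abs_of_pos hdR]
    have h3 : |(d : ℝ) * x i - (p i : ℝ)| / d ≤ (1 / 2) / d := by gcongr
    have h4 : (1 / 2 : ℝ) / d ≤ 1 / d := by gcongr; norm_num
    linarith
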